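/- arXiv:2502.05545 — 3 statements merged into one kernel-verified Lean document; each statement's English description precedes it below -/
import Mathlib

section
/- Assume α₂ > α₃. Then q₂ > q₁, where q₂ := k₂·(B−C)/(√(α₂·π)·erf(z₀·√(α₁/α₂))) and q₁ := k₁·(C−D)/√(π·α₁). -/
noncomputable section

/-- The error function `erf x = (2/√π) ∫₀ˣ exp(−s²) ds`. -/
def erf (x : ℝ) : ℝ := (2 / Real.sqrt Real.pi) * ∫ s in (0:ℝ)..x, Real.exp (-(s^2))

/-- The complementary error function. -/
def erfc (x : ℝ) : ℝ := 1 - erf x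

/-- Physical data of the three-phase Stefan problem: positive thermal conductivities,
specific heats, mass density, latent heats, and temperatures `B > C > D`. -/
structure Params where
  k₁ : ℝ
  k₂ : ℝ
  k₃ : ℝ
  c₁ : ℝ
  c₂ : ℝ
  c₃ : ℝ
  ρ : ℝ
  ℓ₁ : ℝ
  ℓ₂ : ℝ
  B : ℝ
  C : ℝ
  D : ℝ
  hk₁ : 0 < k₁
  hk₂ : 0 < k₂
  hk₃ : 0 < k₃
  hc₁ : 0 < c₁
  hc₂ : 0 < c₂
  hc₃ : 0 < c₃
  hρ : 0 < ρ
  hℓ₁ : 0 < ℓ₁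
  hℓ₂ : 0 < ℓ₂
  hBC : C < B
  hCD : D < C

namespace Params

/-- Thermal diffusivity of phase 1. -/
def α₁ (p : Params) : ℝ := p.k₁ / (p.ρ * p.c₁)

/-- Thermal diffusivity of phase 2. -/
def α₂ (p : Params) : ℝ := p.k₂ / (p.ρ * p.c₂)

/-- Thermal diffusivity of phase 3. -/
def α₃ (p : Params) : ℝ := p.k₃ / (p.ρ * p.c₃)

/-- Stefan number `Ste₁ = c₁(C−D)/ℓ₁`. -/
def Ste₁ (p : Params) : ℝ := p.c₁ * (p.C - p.D) / p.ℓ₁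

/-- Stefan number `Ste₂ = c₂(B−C)/ℓ₂`. -/
def Ste₂ (p : Params) : ℝ := p.c₂ * (p.B - p.C) / p.ℓ₂

/-- `φ(z) = z + (Ste₁/√π) exp(−z²)/erfc(z)`. -/
def φ (p : Params) (z : ℝ) : ℝ :=
  z + (p.Ste₁ / Real.sqrt Real.pi) * Real.exp (-(z^2)) / erfc z

/-- `H(z) = erf(z√(α₁/α₂)) − (Ste₂/√π)(ℓ₂/ℓ₁)√(k₂c₁/(k₁c₂)) exp(−z²α₁/α₂)/φ(z)`. -/
def H (p : Params) (z : ℝ) : ℝ :=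
  erf (z * Real.sqrt (p.α₁ / p.α₂)) -
    (p.Ste₂ / Real.sqrt Real.pi) * (p.ℓ₂ / p.ℓ₁) *
      Real.sqrt (p.k₂ * p.c₁ / (p.k₁ * p.c₂)) *
      (Real.exp (-(z^2) * (p.α₁ / p.α₂)) / p.φ z)

/-- `Q(z) = (ℓ₁/ℓ₂) φ(z) exp(z² α₁/α₂)`. -/
def Q (p : Params) (z : ℝ) : ℝ :=
  (p.ℓ₁ / p.ℓ₂) * p.φ z * Real.exp (z^2 * (p.α₁ / p.α₂))

/-- The function `T` arising from the Robin (convective) boundary condition with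
heat-transfer coefficient `h₀` and bulk temperature `Ainf`. -/
def T (p : Params) (h₀ Ainf : ℝ) (z : ℝ) : ℝ :=
  (p.Ste₂ / (Real.sqrt Real.pi * p.c₂)) * ((Ainf - p.B) / (p.B - p.C)) *
    Real.sqrt (p.k₃ * p.c₁ * p.c₃ / p.k₁) *
    (Real.exp (-(z^2) * p.α₁ * (1 / p.α₃ - 1 / p.α₂)) /
      (p.k₃ / (h₀ * Real.sqrt (Real.pi * p.α₃)) + erf (z * Real.sqrt (p.α₁ / p.α₃)))) -
  z * Real.exp (z^2 * (p.α₁ / p.α₂))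

/-- The function `V` arising from the Dirichlet boundary condition with temperature `A`. -/
def V (p : Params) (A : ℝ) (z : ℝ) : ℝ :=
  ((A - p.B) / p.ℓ₂) * Real.sqrt (p.c₁ * p.c₃ * p.k₃ / (Real.pi * p.k₁)) *
    (Real.exp (-(z^2) * (p.α₁ / p.α₃ - p.α₁ / p.α₂)) / erf (z * Real.sqrt (p.α₁ / p.α₃))) -
  z * Real.exp (z^2 * (p.α₁ / p.α₂))

/-- The function `P` arising from the Neumann boundary condition with flux coefficient `q₀`. -/
def P (p : Params) (q₀ : ℝ) (z : ℝ) : ℝ :=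
  Real.exp (z^2 * (p.α₁ / p.α₂)) *
    (-z + (q₀ / p.ℓ₂) * Real.sqrt (p.c₁ / (p.ρ * p.k₁)) * Real.exp (-(z^2) * (p.α₁ / p.α₃)))

/-- Critical heat-transfer coefficient `h₂`. -/
def h2 (p : Params) (Ainf z₀ : ℝ) : ℝ :=
  ((p.B - p.C) / (Ainf - p.B)) *
    Real.sqrt (p.k₂ * p.k₃ * p.c₂ / (Real.pi * p.c₃ * p.α₃)) *
    (1 / erf (z₀ * Real.sqrt (p.α₁ / p.α₂)))

/-- Critical heat-flux coefficient `q₂`. -/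
def q2 (p : Params) (z₀ : ℝ) : ℝ :=
  p.k₂ * (p.B - p.C) / (Real.sqrt (p.α₂ * Real.pi) * erf (z₀ * Real.sqrt (p.α₁ / p.α₂)))

end Params

section ErfcLemmas

open MeasureTheory Set

lemma gauss_integrable : Integrable (fun s : ℝ => Real.exp (-(s^2))) := by
  simpa using integrable_exp_neg_mul_sq (b := 1) one_pos

lemma gauss_Ioi_zero : ∫ s in Ioi (0:ℝ), Real.exp (-(s^2)) = Real.sqrt Real.pi / 2 := by
  simpa using integral_gaussian_Ioi 1

lemma erfc_eq_Ioi {z : ℝ} (hz : 0 ≤ z) :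
    erfc z = (2 / Real.sqrt Real.pi) * ∫ s in Ioi z, Real.exp (-(s^2)) := by
  have hsπ : (0:ℝ) < Real.sqrt Real.pi := Real.sqrt_pos.mpr Real.pi_pos
  have hsplit : (Real.sqrt Real.pi / 2)
      = (∫ s in Ioc (0:ℝ) z, Real.exp (-(s^2))) + ∫ s in Ioi z, Real.exp (-(s^2)) := by
    rw [← gauss_Ioi_zero, ← setIntegral_union (Ioc_disjoint_Ioi le_rfl) measurableSet_Ioi
      gauss_integrable.integrableOn gauss_integrable.integrableOn, Ioc_union_Ioi_eq_Ioi hz]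
  have hIoc : (∫ s in Ioc (0:ℝ) z, Real.exp (-(s^2)))
      = Real.sqrt Real.pi / 2 - ∫ s in Ioi z, Real.exp (-(s^2)) := by linarith
  unfold erfc erf
  rw [intervalIntegral.integral_of_le hz, hIoc]
  field_simp
  ring

lemma erfc_pos' {z : ℝ} (hz : 0 ≤ z) : 0 < erfc z := by
  rw [erfc_eq_Ioi hz]
  have hsπ : (0:ℝ) < Real.sqrt Real.pi := Real.sqrt_pos.mpr Real.pi_pos
  have h : 0 < ∫ s in Ioi z, Real.exp (-(s^2)) := by
    rw [setIntegral_pos_iff_support_of_nonneg_ae]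
    · have : Function.support (fun s : ℝ => Real.exp (-(s^2))) = univ := by
        ext x; simp [Function.support, (Real.exp_pos _).ne']
      rw [this, univ_inter]
      simp [Real.volume_Ioi]
    · filter_upwards with x using (Real.exp_pos _).le
    · exact gauss_integrable.integrableOn
  positivity

lemma erfc_le_exp' {z : ℝ} (hz : 0 ≤ z) : erfc z ≤ Real.exp (-(z^2)) := by
  have hsπ : (0:ℝ) < Real.sqrt Real.pi := Real.sqrt_pos.mpr Real.pi_pos
  rw [erfc_eq_Ioi hz]
  have hshift : (∫ s in Ioi z, Real.exp (-(s^2)))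
      = ∫ t in Ioi (0:ℝ), Real.exp (-((t + z)^2)) := by
    rw [← (measurePreserving_add_right volume z).setIntegral_preimage_emb
      (measurableEmbedding_addRight z) (fun y => Real.exp (-(y^2))) (Ioi z)]
    congr 1
    simp [preimage_add_const_Ioi]
  have hbound : (∫ t in Ioi (0:ℝ), Real.exp (-((t + z)^2)))
      ≤ ∫ t in Ioi (0:ℝ), Real.exp (-(z^2)) * Real.exp (-(t^2)) := by
    apply setIntegral_mono_on
    · exact (gauss_integrable.comp_add_right z).integrableOn
    · exact (gauss_integrable.const_mul _).integrableOn
    · exact measurableSet_Ioi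
    · intro t ht
      rw [← Real.exp_add]
      apply Real.exp_le_exp.mpr
      nlinarith [le_of_lt (mem_Ioi.mp ht)]
  have hval : (∫ t in Ioi (0:ℝ), Real.exp (-(z^2)) * Real.exp (-(t^2)))
      = Real.exp (-(z^2)) * (Real.sqrt Real.pi / 2) := by
    rw [integral_const_mul, gauss_Ioi_zero]
  calc (2 / Real.sqrt Real.pi) * ∫ s in Ioi z, Real.exp (-(s^2))
      ≤ (2 / Real.sqrt Real.pi) * (Real.exp (-(z^2)) * (Real.sqrt Real.pi / 2)) := by
        apply mul_le_mul_of_nonneg_left _ (by positivity)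
        rw [hshift]; exact hbound.trans hval.le
    _ = Real.exp (-(z^2)) := by field_simp

end ErfcLemmas

/-- if `α₂ > α₃`, then `q₂ > q₁` where `q₁ = k₁(C−D)/√(πα₁)`. -/
theorem q2_gt_q1 (p : Params) (z₀ : ℝ)
    (hα : p.α₃ < p.α₂)
    (hz₀ : 0 < z₀ ∧ p.H z₀ = 0) :
    p.k₁ * (p.C - p.D) / Real.sqrt (Real.pi * p.α₁) < p.q2 z₀ := by
  obtain ⟨hz0, hH⟩ := hz₀
  have hπ := Real.pi_pos
  have hsπ : (0:ℝ) < Real.sqrt Real.pi := Real.sqrt_pos.mpr hπ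
  have hα₁ : 0 < p.α₁ := div_pos p.hk₁ (mul_pos p.hρ p.hc₁)
  have hα₂ : 0 < p.α₂ := div_pos p.hk₂ (mul_pos p.hρ p.hc₂)
  have hsa : (0:ℝ) < Real.sqrt p.α₁ := Real.sqrt_pos.mpr hα₁
  have hBC : (0:ℝ) < p.B - p.C := sub_pos.mpr p.hBC
  have hCD : (0:ℝ) < p.C - p.D := sub_pos.mpr p.hCD
  have hS1 : 0 < p.Ste₁ := div_pos (mul_pos p.hc₁ hCD) p.hℓ₁
  have hS2 : 0 < p.Ste₂ := div_pos (mul_pos p.hc₂ hBC) p.hℓ₂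
  have herfc : 0 < erfc z₀ := erfc_pos' hz0.le
  have hratio : 1 ≤ Real.exp (-(z₀^2)) / erfc z₀ :=
    (one_le_div herfc).mpr (erfc_le_exp' hz0.le)
  have hφ : 0 < p.φ z₀ := by
    unfold Params.φ
    have : 0 < (p.Ste₁ / Real.sqrt Real.pi) * Real.exp (-(z₀^2)) / erfc z₀ := by positivity
    linarith
  -- key scalar inequality
  have hE2 : Real.exp (-(z₀^2) * (p.α₁ / p.α₂)) ≤ 1 := by
    apply Real.exp_le_one_iff.mpr
    have : 0 ≤ z₀^2 * (p.α₁ / p.α₂) := mul_nonneg (sq_nonneg _) (div_pos hα₁ hα₂).le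
    linarith
  have hφeq : Real.sqrt Real.pi * p.φ z₀
      = Real.sqrt Real.pi * z₀ + p.Ste₁ * (Real.exp (-(z₀^2)) / erfc z₀) := by
    unfold Params.φ
    field_simp
  have hkey : p.Ste₁ * Real.exp (-(z₀^2) * (p.α₁ / p.α₂)) < Real.sqrt Real.pi * p.φ z₀ := by
    have h1 : p.Ste₁ * Real.exp (-(z₀^2) * (p.α₁ / p.α₂)) ≤ p.Ste₁ :=
      (mul_le_of_le_one_right hS1.le hE2)
    have h2 : p.Ste₁ ≤ p.Ste₁ * (Real.exp (-(z₀^2)) / erfc z₀) :=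
      le_mul_of_one_le_right hS1.le hratio
    nlinarith [mul_pos hsπ hz0]
  -- from H z₀ = 0
  have hE : erf (z₀ * Real.sqrt (p.α₁ / p.α₂))
      = (p.Ste₂ / Real.sqrt Real.pi) * (p.ℓ₂ / p.ℓ₁) *
          Real.sqrt (p.k₂ * p.c₁ / (p.k₁ * p.c₂)) *
          (Real.exp (-(z₀^2) * (p.α₁ / p.α₂)) / p.φ z₀) := by
    have := hH
    unfold Params.H at this
    linarith [this]
  have hX : (0:ℝ) < Real.sqrt (p.k₂ * p.c₁ / (p.k₁ * p.c₂)) :=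
    Real.sqrt_pos.mpr (div_pos (mul_pos p.hk₂ p.hc₁) (mul_pos p.hk₁ p.hc₂))
  have hk₁' := p.hk₁.ne'
  have hc₁' := p.hc₁.ne'
  have hk₂' := p.hk₂.ne'
  have hc₂' := p.hc₂.ne'
  have hρ' := p.hρ.ne'
  have hℓ₁' := p.hℓ₁.ne'
  have hℓ₂' := p.hℓ₂.ne'
  have hEpos : 0 < erf (z₀ * Real.sqrt (p.α₁ / p.α₂)) := by
    rw [hE]
    exact mul_pos (mul_pos (mul_pos (div_pos hS2 hsπ) (div_pos p.hℓ₂ p.hℓ₁)) hX)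
      (div_pos (Real.exp_pos _) hφ)
  -- sqrt identities
  have h1 : Real.sqrt (Real.pi * p.α₁) = Real.sqrt Real.pi * Real.sqrt p.α₁ :=
    Real.sqrt_mul hπ.le _
  have h4 : Real.sqrt (p.α₂ * Real.pi) * Real.sqrt (p.k₂ * p.c₁ / (p.k₁ * p.c₂))
      = Real.sqrt Real.pi * ((p.k₂ / p.c₂) * ((p.c₁ / p.k₁) * Real.sqrt p.α₁)) := by
    rw [← Real.sqrt_sq (le_of_lt (div_pos p.hk₂ p.hc₂)),
        ← Real.sqrt_sq (le_of_lt (div_pos p.hc₁ p.hk₁))]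
    rw [← Real.sqrt_mul (sq_nonneg (p.c₁ / p.k₁)), ← Real.sqrt_mul (sq_nonneg (p.k₂ / p.c₂)),
        ← Real.sqrt_mul hπ.le, ← Real.sqrt_mul (mul_pos hα₂ hπ).le]
    congr 1
    unfold Params.α₁ Params.α₂
    field_simp
  -- main inequality
  unfold Params.q2
  rw [div_lt_div_iff₀ (by positivity) (by positivity), hE, h1]
  calc p.k₁ * (p.C - p.D) *
        (Real.sqrt (p.α₂ * Real.pi) *
          ((p.Ste₂ / Real.sqrt Real.pi) * (p.ℓ₂ / p.ℓ₁) *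
            Real.sqrt (p.k₂ * p.c₁ / (p.k₁ * p.c₂)) *
            (Real.exp (-(z₀^2) * (p.α₁ / p.α₂)) / p.φ z₀)))
      = (Real.sqrt (p.α₂ * Real.pi) * Real.sqrt (p.k₂ * p.c₁ / (p.k₁ * p.c₂))) *
          (p.k₁ * (p.C - p.D) * ((p.Ste₂ / Real.sqrt Real.pi) * (p.ℓ₂ / p.ℓ₁)) *
            (Real.exp (-(z₀^2) * (p.α₁ / p.α₂)) / p.φ z₀)) := by ring
    _ = (p.k₂ * (p.B - p.C) * Real.sqrt p.α₁) *
          ((p.c₁ * (p.C - p.D) / p.ℓ₁) * Real.exp (-(z₀^2) * (p.α₁ / p.α₂))) / p.φ z₀ := by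
        rw [h4]
        unfold Params.Ste₂
        field_simp
    _ = (p.k₂ * (p.B - p.C) * Real.sqrt p.α₁) *
          (p.Ste₁ * Real.exp (-(z₀^2) * (p.α₁ / p.α₂))) / p.φ z₀ := by
        unfold Params.Ste₁; ring
    _ < (p.k₂ * (p.B - p.C) * Real.sqrt p.α₁) * (Real.sqrt Real.pi * p.φ z₀) / p.φ z₀ := by
        have hA : 0 < p.k₂ * (p.B - p.C) * Real.sqrt p.α₁ := mul_pos (mul_pos p.hk₂ hBC) hsa
        exact div_lt_div_of_pos_right (mul_lt_mul_of_pos_left hkey hA) hφ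
    _ = p.k₂ * (p.B - p.C) * (Real.sqrt Real.pi * Real.sqrt p.α₁) := by
        field_simp
end
end

section
/- (Equivalence Robin → Dirichlet.) Assume α₂ > α₃, A∞ > B, and h₀ > h₂. Let ξ₁ > z₀ be the unique solution of the reduced Robin system, i.e. Q(ξ₁) = T(ξ₂) where ξ₂ ≥ 0 satisfies erf(ξ₂·√(α₁/α₂)) = H(ξ₁). Define A := (B·k₃/(h₀·√(π·α₃)) + A∞·erf(ξ₂·√(α₁/α₃)))/(k₃/(h₀·√(π·α₃)) + erf(ξ₂·√(α₁/α₃))). Then A > B and Q(ξ₁) = V(ξ₂), where V is the Dirichlet function built from this A; consequently ξ₁ coincides with the unique solution μ₁ > z₀ of the reduced Dirichlet system with data A, and ξ₂ = μ₂. -/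
noncomputable section

section ErfLemmas
open MeasureTheory Set

lemma gauss_integrableOn (x : ℝ) :
    IntegrableOn (fun s : ℝ => Real.exp (-(s^2))) (Ioi x) := by
  have h : Integrable (fun s : ℝ => Real.exp (-1 * s^2)) := integrable_exp_neg_mul_sq one_pos
  simpa [neg_one_mul] using h.integrableOn

lemma gauss_Ioi_pos (x : ℝ) : 0 < ∫ s in Ioi x, Real.exp (-(s^2)) := by
  rw [setIntegral_pos_iff_support_of_nonneg_ae
    (Filter.Eventually.of_forall (fun s => (Real.exp_pos _).le)) (gauss_integrableOn x)]
  have hsupp : (Function.support fun s : ℝ => Real.exp (-(s^2))) = univ := by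
    ext s; simp [Function.support, (Real.exp_pos _).ne']
  rw [hsupp, univ_inter]
  simp [Real.volume_Ioi]

lemma gauss_intervalIntegrable (a b : ℝ) :
    IntervalIntegrable (fun s : ℝ => Real.exp (-(s^2))) volume a b :=
  Continuous.intervalIntegrable (by continuity) a b

lemma erf_zero : erf 0 = 0 := by simp [erf]

lemma erf_strictMono : StrictMono erf := by
  intro x y hxy
  have key : erf y - erf x = (2 / Real.sqrt Real.pi) * ∫ s in x..y, Real.exp (-(s^2)) := by
    rw [erf, erf, ← mul_sub,
      intervalIntegral.integral_interval_sub_left (gauss_intervalIntegrable 0 y)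
        (gauss_intervalIntegrable 0 x)]
  have hpos : 0 < (2 / Real.sqrt Real.pi) * ∫ s in x..y, Real.exp (-(s^2)) := by
    apply mul_pos (by positivity)
    exact intervalIntegral.intervalIntegral_pos_of_pos (gauss_intervalIntegrable x y)
      (fun s => Real.exp_pos _) hxy
  linarith [key ▸ hpos]

lemma erf_pos {x : ℝ} (hx : 0 < x) : 0 < erf x := erf_zero ▸ erf_strictMono hx

lemma erfc_eq {x : ℝ} (hx : 0 ≤ x) :
    erfc x = (2 / Real.sqrt Real.pi) * ∫ s in Ioi x, Real.exp (-(s^2)) := by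
  have hdisj : Disjoint (Ioc 0 x) (Ioi x) := by
    rw [Set.disjoint_left]; rintro a ⟨_, h1⟩ h2; exact absurd h1 (not_le.2 h2)
  have hsplit : (∫ s in Ioc 0 x, Real.exp (-(s^2))) + ∫ s in Ioi x, Real.exp (-(s^2))
      = ∫ s in Ioi (0:ℝ), Real.exp (-(s^2)) := by
    rw [← setIntegral_union hdisj measurableSet_Ioi
      ((gauss_integrableOn 0).mono_set Ioc_subset_Ioi_self) (gauss_integrableOn x),
      Ioc_union_Ioi_eq_Ioi hx]
  have hval : (∫ s in Ioi (0:ℝ), Real.exp (-(s^2))) = Real.sqrt Real.pi / 2 := by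
    have := integral_gaussian_Ioi 1
    simpa [neg_one_mul] using this
  have herf : erf x = (2 / Real.sqrt Real.pi) * ∫ s in Ioc 0 x, Real.exp (-(s^2)) := by
    rw [erf, intervalIntegral.integral_of_le hx]
  have hπ : Real.sqrt Real.pi ≠ 0 := by positivity
  rw [erfc, herf]
  rw [hval] at hsplit
  field_simp
  linarith [hsplit]

lemma erfc_pos {x : ℝ} (hx : 0 ≤ x) : 0 < erfc x := by
  rw [erfc_eq hx]
  exact mul_pos (by positivity) (gauss_Ioi_pos x)

lemma gauss_shift (z : ℝ) :
    ∫ s in Ioi z, Real.exp (-(s^2)) = ∫ t in Ioi (0:ℝ), Real.exp (-((t+z)^2)) := by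
  have h := (measurePreserving_add_right (volume : Measure ℝ) z).setIntegral_preimage_emb
      (measurableEmbedding_addRight z) (fun s => Real.exp (-(s^2))) (Ioi z)
  have hpre : (fun t : ℝ => t + z) ⁻¹' (Ioi z) = Ioi (0:ℝ) := by ext t; simp
  rw [hpre] at h
  exact h.symm

lemma shift_integrableOn {x : ℝ} (hx : 0 ≤ x) :
    IntegrableOn (fun t : ℝ => Real.exp (-((t+x)^2))) (Ioi 0) := by
  refine Integrable.mono' (gauss_integrableOn 0) ?_ ?_
  · exact (Continuous.aestronglyMeasurable (by continuity))
  · refine (ae_restrict_iff' measurableSet_Ioi).2 (Filter.Eventually.of_forall fun t ht => ?_)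
    rw [Real.norm_eq_abs, abs_of_pos (Real.exp_pos _)]
    apply Real.exp_le_exp.2
    have ht' : 0 < t := ht
    nlinarith

lemma ratio_antitone {z w : ℝ} (hz : 0 ≤ z) (hzw : z ≤ w) :
    Real.exp (w^2) * ∫ s in Ioi w, Real.exp (-(s^2))
      ≤ Real.exp (z^2) * ∫ s in Ioi z, Real.exp (-(s^2)) := by
  have hw : 0 ≤ w := hz.trans hzw
  rw [gauss_shift z, gauss_shift w, ← integral_const_mul, ← integral_const_mul]
  refine setIntegral_mono_on ((shift_integrableOn hw).const_mul _)
    ((shift_integrableOn hz).const_mul _) measurableSet_Ioi fun t ht => ?_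
  rw [← Real.exp_add, ← Real.exp_add]
  apply Real.exp_le_exp.2
  have ht' : 0 < t := ht
  nlinarith

lemma ratio_mono {z w : ℝ} (hz : 0 ≤ z) (hzw : z ≤ w) :
    Real.exp (-(z^2)) / erfc z ≤ Real.exp (-(w^2)) / erfc w := by
  have hw : 0 ≤ w := hz.trans hzw
  have hπ : (0:ℝ) < Real.sqrt Real.pi := by positivity
  have key : ∀ x : ℝ, 0 ≤ x → Real.exp (-(x^2)) / erfc x
      = (Real.sqrt Real.pi / 2) / (Real.exp (x^2) * ∫ s in Ioi x, Real.exp (-(s^2))) := by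
    intro x hx
    rw [erfc_eq hx, Real.exp_neg]
    have hI := gauss_Ioi_pos x
    have he := Real.exp_pos (x^2)
    field_simp
  rw [key z hz, key w hw]
  have h1 : 0 < Real.exp (w^2) * ∫ s in Ioi w, Real.exp (-(s^2)) := by
    exact mul_pos (Real.exp_pos _) (gauss_Ioi_pos w)
  exact div_le_div_of_nonneg_left (by positivity) h1 (ratio_antitone hz hzw)

end ErfLemmas

namespace Params
variable (p : Params)

lemma α₁_pos : 0 < p.α₁ := div_pos p.hk₁ (mul_pos p.hρ p.hc₁)
lemma α₂_pos : 0 < p.α₂ := div_pos p.hk₂ (mul_pos p.hρ p.hc₂)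
lemma α₃_pos : 0 < p.α₃ := div_pos p.hk₃ (mul_pos p.hρ p.hc₃)
lemma Ste₁_pos : 0 < p.Ste₁ := div_pos (mul_pos p.hc₁ (sub_pos.2 p.hCD)) p.hℓ₁
lemma Ste₂_pos : 0 < p.Ste₂ := div_pos (mul_pos p.hc₂ (sub_pos.2 p.hBC)) p.hℓ₂

lemma phi_pos {z : ℝ} (hz : 0 ≤ z) : 0 < p.φ z := by
  have h1 : 0 < (p.Ste₁ / Real.sqrt Real.pi) * Real.exp (-(z^2)) / erfc z := by
    apply div_pos (mul_pos (div_pos p.Ste₁_pos (by positivity)) (Real.exp_pos _)) (erfc_pos hz)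
  have := p.Ste₁_pos
  rw [Params.φ]
  linarith

lemma phi_lt {z w : ℝ} (hz : 0 ≤ z) (hzw : z < w) : p.φ z < p.φ w := by
  have h := ratio_mono hz hzw.le
  have hc : 0 ≤ p.Ste₁ / Real.sqrt Real.pi := by
    have := p.Ste₁_pos; positivity
  have h2 := mul_le_mul_of_nonneg_left h hc
  rw [Params.φ, Params.φ, mul_div_assoc, mul_div_assoc]
  linarith

lemma H_lt {z w : ℝ} (hz : 0 ≤ z) (hzw : z < w) : p.H z < p.H w := by
  have hr : 0 < p.α₁ / p.α₂ := div_pos p.α₁_pos p.α₂_pos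
  have hs : 0 < Real.sqrt (p.α₁ / p.α₂) := Real.sqrt_pos.2 hr
  have h1 : erf (z * Real.sqrt (p.α₁ / p.α₂)) < erf (w * Real.sqrt (p.α₁ / p.α₂)) :=
    erf_strictMono (mul_lt_mul_of_pos_right hzw hs)
  have hK : 0 ≤ (p.Ste₂ / Real.sqrt Real.pi) * (p.ℓ₂ / p.ℓ₁) *
      Real.sqrt (p.k₂ * p.c₁ / (p.k₁ * p.c₂)) := by
    have := p.Ste₂_pos; have := p.hℓ₁; have := p.hℓ₂; positivity
  have h2 : Real.exp (-(w^2) * (p.α₁ / p.α₂)) / p.φ w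
      ≤ Real.exp (-(z^2) * (p.α₁ / p.α₂)) / p.φ z := by
    apply div_le_div₀ (Real.exp_pos _).le _ (p.phi_pos hz) (p.phi_lt hz hzw).le
    apply Real.exp_le_exp.2
    have hsq : z^2 ≤ w^2 := by nlinarith
    nlinarith [mul_le_mul_of_nonneg_right hsq hr.le]
  have h3 := mul_le_mul_of_nonneg_left h2 hK
  rw [Params.H, Params.H]
  linarith

lemma Q_lt {z w : ℝ} (hz : 0 ≤ z) (hzw : z < w) : p.Q z < p.Q w := by
  have hr : 0 < p.α₁ / p.α₂ := div_pos p.α₁_pos p.α₂_pos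
  have hl : 0 < p.ℓ₁ / p.ℓ₂ := div_pos p.hℓ₁ p.hℓ₂
  have hφ := p.phi_lt hz hzw
  have hφz := p.phi_pos hz
  have he : Real.exp (z^2 * (p.α₁ / p.α₂)) ≤ Real.exp (w^2 * (p.α₁ / p.α₂)) := by
    apply Real.exp_le_exp.2
    have hsq : z^2 ≤ w^2 := by nlinarith
    nlinarith [mul_le_mul_of_nonneg_right hsq hr.le]
  have hez := Real.exp_pos (z^2 * (p.α₁ / p.α₂))
  have hφw := p.phi_pos (hz.trans hzw.le)
  have s1 := mul_lt_mul_of_pos_right (mul_lt_mul_of_pos_left hφ hl) hez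
  have s2 := mul_le_mul_of_nonneg_left he (mul_nonneg hl.le hφw.le)
  rw [Params.Q, Params.Q]
  linarith

lemma V_lt {A : ℝ} (hAB : p.B < A) (hα : p.α₃ < p.α₂) {z w : ℝ} (hz : 0 < z) (hzw : z < w) :
    p.V A w < p.V A z := by
  have hr : 0 < p.α₁ / p.α₂ := div_pos p.α₁_pos p.α₂_pos
  have hd : 0 < p.α₁ / p.α₃ - p.α₁ / p.α₂ :=
    sub_pos.2 (div_lt_div_of_pos_left p.α₁_pos p.α₃_pos hα)
  have hs : 0 < Real.sqrt (p.α₁ / p.α₃) := Real.sqrt_pos.2 (div_pos p.α₁_pos p.α₃_pos)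
  have hC : 0 ≤ (A - p.B) / p.ℓ₂ * Real.sqrt (p.c₁ * p.c₃ * p.k₃ / (Real.pi * p.k₁)) := by
    have h1 : 0 < A - p.B := sub_pos.2 hAB
    have := p.hℓ₂; positivity
  have hEz : 0 < erf (z * Real.sqrt (p.α₁ / p.α₃)) := erf_pos (mul_pos hz hs)
  have hterm : Real.exp (-(w^2) * (p.α₁ / p.α₃ - p.α₁ / p.α₂)) / erf (w * Real.sqrt (p.α₁ / p.α₃))
      ≤ Real.exp (-(z^2) * (p.α₁ / p.α₃ - p.α₁ / p.α₂)) / erf (z * Real.sqrt (p.α₁ / p.α₃)) := by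
    apply div_le_div₀ (Real.exp_pos _).le _ hEz
      (erf_strictMono (mul_lt_mul_of_pos_right hzw hs)).le
    apply Real.exp_le_exp.2
    have hsq : z^2 ≤ w^2 := by nlinarith
    nlinarith [mul_le_mul_of_nonneg_right hsq hd.le]
  have h3 := mul_le_mul_of_nonneg_left hterm hC
  have h4 : z * Real.exp (z^2 * (p.α₁ / p.α₂)) < w * Real.exp (w^2 * (p.α₁ / p.α₂)) := by
    have he : Real.exp (z^2 * (p.α₁ / p.α₂)) ≤ Real.exp (w^2 * (p.α₁ / p.α₂)) := by
      apply Real.exp_le_exp.2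
      have hsq : z^2 ≤ w^2 := by nlinarith
      nlinarith [mul_le_mul_of_nonneg_right hsq hr.le]
    have hez := Real.exp_pos (z^2 * (p.α₁ / p.α₂))
    have s1 := mul_lt_mul_of_pos_right hzw hez
    have s2 := mul_le_mul_of_nonneg_left he (by linarith : (0:ℝ) ≤ w)
    linarith
  rw [Params.V, Params.V]
  linarith

end Params

set_option maxHeartbeats 1000000 in
/-- Equivalence Robin → Dirichlet. -/
theorem robin_to_dirichlet (p : Params) (h₀ Ainf z₀ ξ₁ ξ₂ A : ℝ)
    (hα : p.α₃ < p.α₂) (hAinf : p.B < Ainf)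
    (hz₀ : 0 < z₀ ∧ p.H z₀ = 0)
    (hh₀ : p.h2 Ainf z₀ < h₀)
    (hξ₁ : z₀ < ξ₁) (hξ₂ : 0 ≤ ξ₂)
    (herf : erf (ξ₂ * Real.sqrt (p.α₁ / p.α₂)) = p.H ξ₁)
    (hsys : p.Q ξ₁ = p.T h₀ Ainf ξ₂)
    (hA : A = (p.B * p.k₃ / (h₀ * Real.sqrt (Real.pi * p.α₃)) +
        Ainf * erf (ξ₂ * Real.sqrt (p.α₁ / p.α₃))) /
        (p.k₃ / (h₀ * Real.sqrt (Real.pi * p.α₃)) +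
          erf (ξ₂ * Real.sqrt (p.α₁ / p.α₃)))) :
    p.B < A ∧ p.Q ξ₁ = p.V A ξ₂ ∧
    ∀ μ₁ μ₂ : ℝ, z₀ < μ₁ → 0 ≤ μ₂ →
      erf (μ₂ * Real.sqrt (p.α₁ / p.α₂)) = p.H μ₁ →
      p.Q μ₁ = p.V A μ₂ → μ₁ = ξ₁ ∧ μ₂ = ξ₂ := by
  obtain ⟨hz₀pos, hz₀H⟩ := hz₀
  have hπ : (0:ℝ) < Real.pi := Real.pi_pos
  have hk₁ := p.hk₁; have hk₂ := p.hk₂; have hk₃ := p.hk₃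
  have hc₁ := p.hc₁; have hc₂ := p.hc₂; have hc₃ := p.hc₃
  have hℓ₁ := p.hℓ₁; have hℓ₂ := p.hℓ₂
  have hα₁ := p.α₁_pos; have hα₂ := p.α₂_pos; have hα₃ := p.α₃_pos
  have hr₂ : 0 < p.α₁ / p.α₂ := div_pos hα₁ hα₂
  have hs₂ : 0 < Real.sqrt (p.α₁ / p.α₂) := Real.sqrt_pos.2 hr₂
  have hs₃ : 0 < Real.sqrt (p.α₁ / p.α₃) := Real.sqrt_pos.2 (div_pos hα₁ hα₃)
  -- positivity of h₀
  have hh2pos : 0 < p.h2 Ainf z₀ := by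
    rw [Params.h2]
    refine mul_pos (mul_pos (div_pos (sub_pos.2 p.hBC) (sub_pos.2 hAinf)) ?_) ?_
    · exact Real.sqrt_pos.2 (by positivity)
    · exact div_pos one_pos (erf_pos (mul_pos hz₀pos hs₂))
  have hh₀pos : 0 < h₀ := hh2pos.trans hh₀
  have hsπ3 : 0 < Real.sqrt (Real.pi * p.α₃) := Real.sqrt_pos.2 (mul_pos hπ hα₃)
  have hKh : 0 < p.k₃ / (h₀ * Real.sqrt (Real.pi * p.α₃)) :=
    div_pos hk₃ (mul_pos hh₀pos hsπ3)
  -- ξ₂ > 0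
  have hHpos : 0 < p.H ξ₁ := by rw [← hz₀H]; exact p.H_lt hz₀pos.le hξ₁
  have hξ₂pos : 0 < ξ₂ := by
    have h5 : erf 0 < erf (ξ₂ * Real.sqrt (p.α₁ / p.α₂)) := by
      rw [erf_zero, herf]; exact hHpos
    have h6 : 0 < ξ₂ * Real.sqrt (p.α₁ / p.α₂) := erf_strictMono.lt_iff_lt.1 h5
    rcases hξ₂.eq_or_lt' with h7 | h7
    · rw [h7, zero_mul] at h6; exact absurd h6 (lt_irrefl 0)
    · exact h7
  have hE : 0 < erf (ξ₂ * Real.sqrt (p.α₁ / p.α₃)) := erf_pos (mul_pos hξ₂pos hs₃)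
  have hden : 0 < p.k₃ / (h₀ * Real.sqrt (Real.pi * p.α₃)) +
      erf (ξ₂ * Real.sqrt (p.α₁ / p.α₃)) := add_pos hKh hE
  have hAB : A - p.B = (Ainf - p.B) * erf (ξ₂ * Real.sqrt (p.α₁ / p.α₃)) /
      (p.k₃ / (h₀ * Real.sqrt (Real.pi * p.α₃)) + erf (ξ₂ * Real.sqrt (p.α₁ / p.α₃))) := by
    rw [hA, mul_div_assoc p.B]
    set K := p.k₃ / (h₀ * Real.sqrt (Real.pi * p.α₃)) with hKdef
    set E := erf (ξ₂ * Real.sqrt (p.α₁ / p.α₃)) with hEdef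
    have h2 : K + E ≠ 0 := hden.ne'
    field_simp
    ring
  have hApos : p.B < A := by
    have h7 : 0 < (Ainf - p.B) * erf (ξ₂ * Real.sqrt (p.α₁ / p.α₃)) /
        (p.k₃ / (h₀ * Real.sqrt (Real.pi * p.α₃)) + erf (ξ₂ * Real.sqrt (p.α₁ / p.α₃))) :=
      div_pos (mul_pos (sub_pos.2 hAinf) hE) hden
    linarith
  -- the identity T = V
  have hQV : p.Q ξ₁ = p.V A ξ₂ := by
    rw [hsys, Params.T, Params.V, hAB, Params.Ste₂]
    have hexp : -(ξ₂^2) * p.α₁ * (1/p.α₃ - 1/p.α₂) = -(ξ₂^2) * (p.α₁/p.α₃ - p.α₁/p.α₂) := by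
      ring
    have hsq : Real.sqrt (p.c₁ * p.c₃ * p.k₃ / (Real.pi * p.k₁))
        = Real.sqrt (p.k₃ * p.c₁ * p.c₃ / p.k₁) / Real.sqrt Real.pi := by
      rw [show p.c₁ * p.c₃ * p.k₃ / (Real.pi * p.k₁)
            = (p.k₃ * p.c₁ * p.c₃ / p.k₁) / Real.pi from by ring,
        Real.sqrt_div (by positivity)]
    rw [hexp, hsq]
    set K := p.k₃ / (h₀ * Real.sqrt (Real.pi * p.α₃)) with hKdef
    set E := erf (ξ₂ * Real.sqrt (p.α₁ / p.α₃)) with hEdef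
    set S := Real.sqrt (p.k₃ * p.c₁ * p.c₃ / p.k₁) with hSdef
    set X := Real.exp (-(ξ₂^2) * (p.α₁/p.α₃ - p.α₁/p.α₂)) with hXdef
    set Y := Real.exp (ξ₂^2 * (p.α₁ / p.α₂)) with hYdef
    have hne1 : Real.sqrt Real.pi ≠ 0 := by positivity
    have hne2 : p.c₂ ≠ 0 := hc₂.ne'
    have hne3 : p.B - p.C ≠ 0 := (sub_pos.2 p.hBC).ne'
    have hne4 : p.ℓ₂ ≠ 0 := hℓ₂.ne'
    have hne5 : E ≠ 0 := hE.ne'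
    have hne6 : K + E ≠ 0 := hden.ne'
    field_simp
  refine ⟨hApos, hQV, ?_⟩
  intro μ₁ μ₂ hμ₁ hμ₂ herf' hsys'
  have hμ₁pos : 0 < μ₁ := hz₀pos.trans hμ₁
  have hHμ : 0 < p.H μ₁ := by rw [← hz₀H]; exact p.H_lt hz₀pos.le hμ₁
  have hμ₂pos : 0 < μ₂ := by
    have h5 : erf 0 < erf (μ₂ * Real.sqrt (p.α₁ / p.α₂)) := by
      rw [erf_zero, herf']; exact hHμ
    have h6 : 0 < μ₂ * Real.sqrt (p.α₁ / p.α₂) := erf_strictMono.lt_iff_lt.1 h5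
    rcases hμ₂.eq_or_lt' with h7 | h7
    · rw [h7, zero_mul] at h6; exact absurd h6 (lt_irrefl 0)
    · exact h7
  rcases lt_trichotomy μ₁ ξ₁ with h | h | h
  · exfalso
    have hH : p.H μ₁ < p.H ξ₁ := p.H_lt hμ₁pos.le h
    have h8 : erf (μ₂ * Real.sqrt (p.α₁ / p.α₂)) < erf (ξ₂ * Real.sqrt (p.α₁ / p.α₂)) := by
      rw [herf', herf]; exact hH
    have hμξ : μ₂ < ξ₂ := (mul_lt_mul_iff_of_pos_right hs₂).1 (erf_strictMono.lt_iff_lt.1 h8)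
    have q1 : p.Q μ₁ < p.Q ξ₁ := p.Q_lt hμ₁pos.le h
    have v1 : p.V A ξ₂ < p.V A μ₂ := p.V_lt hApos hα hμ₂pos hμξ
    rw [hsys'] at q1
    rw [hQV] at q1
    linarith
  · refine ⟨h, ?_⟩
    have h9 : erf (μ₂ * Real.sqrt (p.α₁ / p.α₂)) = erf (ξ₂ * Real.sqrt (p.α₁ / p.α₂)) := by
      rw [herf', herf, h]
    exact mul_right_cancel₀ hs₂.ne' (erf_strictMono.injective h9)
  · exfalso
    have hξ₁pos : 0 < ξ₁ := hz₀pos.trans hξ₁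
    have hH : p.H ξ₁ < p.H μ₁ := p.H_lt hξ₁pos.le h
    have h8 : erf (ξ₂ * Real.sqrt (p.α₁ / p.α₂)) < erf (μ₂ * Real.sqrt (p.α₁ / p.α₂)) := by
      rw [herf', herf]; exact hH
    have hμξ : ξ₂ < μ₂ := (mul_lt_mul_iff_of_pos_right hs₂).1 (erf_strictMono.lt_iff_lt.1 h8)
    have q1 : p.Q ξ₁ < p.Q μ₁ := p.Q_lt hξ₁pos.le h
    have v1 : p.V A μ₂ < p.V A ξ₂ := p.V_lt hApos hα hξ₂pos hμξ
    rw [hsys'] at q1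
    rw [hQV] at q1
    linarith
end
end

section
/- Assume α₂ > α₃ and A > B. Let μ₁ > z₀ be the unique solution of the reduced Dirichlet system with data A, and let μ₂ ≥ 0 satisfy erf(μ₂·√(α₁/α₂)) = H(μ₁). Then for every A∞ > A, erf(μ₂·√(α₁/α₃)) < √(k₃·c₃/(k₂·c₂))·((A−B)/(B−C))·((A∞−B)/(A∞−A))·erf(z₀·√(α₁/α₂)). -/
noncomputable section

namespace StefanAux
open MeasureTheory Set

lemma gauss_integrable : Integrable (fun s : ℝ => Real.exp (-(s^2))) := by
  have := integrable_exp_neg_mul_sq (b := (1:ℝ)) one_pos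
  simpa using this

lemma erf_zero : erf 0 = 0 := by simp [erf]

lemma erf_lt_erf {x y : ℝ} (h : x < y) : erf x < erf y := by
  have key : (0:ℝ) < ∫ s in x..y, Real.exp (-(s^2)) := by
    apply intervalIntegral.integral_pos h (Real.continuous_exp.comp (by continuity)).continuousOn
    · exact fun t _ => (Real.exp_pos _).le
    · exact ⟨x, ⟨le_rfl, h.le⟩, Real.exp_pos _⟩
  have hadd : (∫ s in (0:ℝ)..x, Real.exp (-(s^2))) + ∫ s in x..y, Real.exp (-(s^2))
      = ∫ s in (0:ℝ)..y, Real.exp (-(s^2)) :=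
    intervalIntegral.integral_add_adjacent_intervals gauss_integrable.intervalIntegrable
      gauss_integrable.intervalIntegrable
  have h2 : 0 < 2 / Real.sqrt Real.pi :=
    div_pos two_pos (Real.sqrt_pos.mpr Real.pi_pos)
  unfold erf
  rw [← hadd]
  nlinarith

lemma erf_pos {x : ℝ} (hx : 0 < x) : 0 < erf x := by
  have := erf_lt_erf hx
  rwa [erf_zero] at this

lemma gauss_Ioi_zero : (∫ s in Ioi (0:ℝ), Real.exp (-(s^2))) = Real.sqrt Real.pi / 2 := by
  have := integral_gaussian_Ioi (1:ℝ)
  simpa using this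

lemma erfc_eq_Ioi {x : ℝ} (hx : 0 ≤ x) :
    erfc x = (2 / Real.sqrt Real.pi) * ∫ s in Ioi x, Real.exp (-(s^2)) := by
  have hsplit : (∫ s in Ioc (0:ℝ) x, Real.exp (-(s^2))) + (∫ s in Ioi x, Real.exp (-(s^2)))
      = ∫ s in Ioi (0:ℝ), Real.exp (-(s^2)) := by
    rw [← setIntegral_union (Ioc_disjoint_Ioi le_rfl) measurableSet_Ioi
      gauss_integrable.integrableOn gauss_integrable.integrableOn,
      Ioc_union_Ioi_eq_Ioi hx]
  have hπ : Real.sqrt Real.pi ≠ 0 := ne_of_gt (Real.sqrt_pos.mpr Real.pi_pos)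
  unfold erfc erf
  rw [intervalIntegral.integral_of_le hx]
  have h3 : (∫ s in Ioc (0:ℝ) x, Real.exp (-(s^2)))
      = Real.sqrt Real.pi / 2 - ∫ s in Ioi x, Real.exp (-(s^2)) := by
    rw [← gauss_Ioi_zero]; linarith [hsplit]
  rw [h3]
  field_simp
  ring

lemma erfc_pos {x : ℝ} (hx : 0 ≤ x) : 0 < erfc x := by
  rw [erfc_eq_Ioi hx]
  have h2 : 0 < 2 / Real.sqrt Real.pi :=
    div_pos two_pos (Real.sqrt_pos.mpr Real.pi_pos)
  refine mul_pos h2 ?_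
  rw [setIntegral_pos_iff_support_of_nonneg_ae
    (Filter.Eventually.of_forall fun s => (Real.exp_pos _).le) gauss_integrable.integrableOn]
  have hsupp : (Function.support fun s : ℝ => Real.exp (-(s^2))) = univ := by
    ext s; simp [Function.support, (Real.exp_pos _).ne']
  rw [hsupp, univ_inter, Real.volume_Ioi]
  simp

lemma shift_Ioi (a d : ℝ) :
    (∫ t in Ioi a, Real.exp (-((t + d)^2))) = ∫ s in Ioi (a + d), Real.exp (-(s^2)) := by
  rw [← integral_indicator measurableSet_Ioi, ← integral_indicator measurableSet_Ioi,
    ← integral_add_right_eq_self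
      (fun s => indicator (Ioi (a + d)) (fun u => Real.exp (-(u^2))) s) d]
  congr 1
  funext t
  by_cases h : t ∈ Ioi a
  · rw [indicator_of_mem h, indicator_of_mem (by simpa [mem_Ioi] using h)]
  · rw [indicator_of_notMem h, indicator_of_notMem (by simpa [mem_Ioi] using h)]

lemma gauss_tail_le {z₁ z₂ : ℝ} (h : z₁ ≤ z₂) :
    (∫ s in Ioi z₂, Real.exp (-(s^2)))
      ≤ Real.exp (z₁^2 - z₂^2) * ∫ t in Ioi z₁, Real.exp (-(t^2)) := by
  set d := z₂ - z₁ with hd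
  have hd0 : 0 ≤ d := by simp [hd]; linarith
  have htrans : (∫ s in Ioi z₂, Real.exp (-(s^2)))
      = ∫ t in Ioi z₁, Real.exp (-((t + d)^2)) := by
    rw [shift_Ioi z₁ d]; congr 1; simp [hd]
  rw [htrans, ← integral_const_mul]
  have hint1 : IntegrableOn (fun t : ℝ => Real.exp (-((t + d)^2))) (Ioi z₁) :=
    (gauss_integrable.comp_add_right d).integrableOn
  have hint2 : IntegrableOn
      (fun t : ℝ => Real.exp (z₁^2 - z₂^2) * Real.exp (-(t^2))) (Ioi z₁) :=
    (gauss_integrable.const_mul _).integrableOn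
  refine setIntegral_mono_on hint1 hint2 measurableSet_Ioi fun t ht => ?_
  rw [← Real.exp_add]
  apply Real.exp_le_exp.mpr
  have ht' : z₁ < t := ht
  have hz2 : z₂ = z₁ + d := by simp [hd]
  rw [hz2]
  nlinarith [mul_le_mul_of_nonneg_left (le_of_lt ht') hd0]

/-- The Mills-type ratio `exp(-z^2)/erfc z` is monotone. -/
lemma mills_mono {z₁ z₂ : ℝ} (h1 : 0 ≤ z₁) (h : z₁ ≤ z₂) :
    Real.exp (-(z₁^2)) / erfc z₁ ≤ Real.exp (-(z₂^2)) / erfc z₂ := by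
  have e1 := erfc_pos h1
  have e2 := erfc_pos (h1.trans h)
  rw [div_le_div_iff₀ e1 e2]
  have h2 : 0 ≤ 2 / Real.sqrt Real.pi :=
    (div_pos two_pos (Real.sqrt_pos.mpr Real.pi_pos)).le
  rw [erfc_eq_Ioi h1, erfc_eq_Ioi (h1.trans h)]
  have key := gauss_tail_le h
  have hmul := mul_le_mul_of_nonneg_left key
    (mul_nonneg (Real.exp_pos (-(z₁^2))).le h2)
  calc Real.exp (-(z₁^2)) * ((2 / Real.sqrt Real.pi) * ∫ s in Ioi z₂, Real.exp (-(s^2)))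
      = Real.exp (-(z₁^2)) * (2 / Real.sqrt Real.pi) * ∫ s in Ioi z₂, Real.exp (-(s^2)) := by
        ring
    _ ≤ Real.exp (-(z₁^2)) * (2 / Real.sqrt Real.pi) *
        (Real.exp (z₁^2 - z₂^2) * ∫ t in Ioi z₁, Real.exp (-(t^2))) := hmul
    _ = (Real.exp (-(z₁^2)) * Real.exp (z₁^2 - z₂^2)) *
        ((2 / Real.sqrt Real.pi) * ∫ t in Ioi z₁, Real.exp (-(t^2))) := by ring
    _ = Real.exp (-(z₂^2)) * ((2 / Real.sqrt Real.pi) * ∫ t in Ioi z₁, Real.exp (-(t^2))) := by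
        rw [← Real.exp_add]; ring_nf

end StefanAux


/-- bound on `erf(μ₂√(α₁/α₃))` for the Dirichlet solution, for every `A∞ > A`. -/


theorem dirichlet_mu2_bound_Ainf (p : Params) (A z₀ μ₁ μ₂ : ℝ)
    (hα : p.α₃ < p.α₂) (hA : p.B < A)
    (hz₀ : 0 < z₀ ∧ p.H z₀ = 0)
    (hμ₁ : z₀ < μ₁) (hμ₂ : 0 ≤ μ₂)
    (herf : erf (μ₂ * Real.sqrt (p.α₁ / p.α₂)) = p.H μ₁)
    (hsys : p.Q μ₁ = p.V A μ₂) :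
    ∀ Ainf : ℝ, A < Ainf →
      erf (μ₂ * Real.sqrt (p.α₁ / p.α₃)) <
        Real.sqrt (p.k₃ * p.c₃ / (p.k₂ * p.c₂)) * ((A - p.B) / (p.B - p.C)) *
          ((Ainf - p.B) / (Ainf - A)) * erf (z₀ * Real.sqrt (p.α₁ / p.α₂)) := by
  classical
  intro Ainf hAinf
  obtain ⟨hz₀pos, hHz₀⟩ := hz₀
  have hz₀0 : (0:ℝ) ≤ z₀ := hz₀pos.le
  have hα₁ : 0 < p.α₁ := div_pos p.hk₁ (mul_pos p.hρ p.hc₁)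
  have hα₂ : 0 < p.α₂ := div_pos p.hk₂ (mul_pos p.hρ p.hc₂)
  have hα₃ : 0 < p.α₃ := div_pos p.hk₃ (mul_pos p.hρ p.hc₃)
  set r : ℝ := p.α₁ / p.α₂ with hr_def
  set sv : ℝ := p.α₁ / p.α₃ with hs_def
  have hr : 0 < r := div_pos hα₁ hα₂
  have hsv : 0 < sv := div_pos hα₁ hα₃
  have hrs : r < sv := div_lt_div_of_pos_left hα₁ hα₃ hα
  have hπ : (0:ℝ) < Real.sqrt Real.pi := Real.sqrt_pos.mpr Real.pi_pos
  have hSte₁ : 0 < p.Ste₁ := div_pos (mul_pos p.hc₁ (sub_pos.mpr p.hCD)) p.hℓ₁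
  have hSte₂ : 0 < p.Ste₂ := div_pos (mul_pos p.hc₂ (sub_pos.mpr p.hBC)) p.hℓ₂
  have hφpos : ∀ z : ℝ, 0 ≤ z → 0 < p.φ z := by
    intro z hz
    have h2 : 0 < (p.Ste₁ / Real.sqrt Real.pi) * Real.exp (-(z^2)) / erfc z :=
      div_pos (mul_pos (div_pos hSte₁ hπ) (Real.exp_pos _)) (StefanAux.erfc_pos hz)
    unfold Params.φ
    linarith
  have hφmono : p.φ z₀ ≤ p.φ μ₁ := by
    unfold Params.φ
    have key := StefanAux.mills_mono hz₀0 hμ₁.le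
    have h3 : 0 ≤ p.Ste₁ / Real.sqrt Real.pi := (div_pos hSte₁ hπ).le
    have h4 := mul_le_mul_of_nonneg_left key h3
    rw [mul_div_assoc, mul_div_assoc]
    linarith
  set Er0 : ℝ := erf (z₀ * Real.sqrt r) with hEr0_def
  have hEr0 : 0 < Er0 := StefanAux.erf_pos (mul_pos hz₀pos (Real.sqrt_pos.mpr hr))
  set W : ℝ := Real.sqrt (p.k₂ * p.c₁ / (p.k₁ * p.c₂)) with hW_def
  have hW : 0 < W :=
    Real.sqrt_pos.mpr (div_pos (mul_pos p.hk₂ p.hc₁) (mul_pos p.hk₁ p.hc₂))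
  set cst : ℝ := p.Ste₂ / Real.sqrt Real.pi * (p.ℓ₂ / p.ℓ₁) * W with hcst_def
  have hcst : 0 < cst :=
    mul_pos (mul_pos (div_pos hSte₂ hπ) (div_pos p.hℓ₂ p.hℓ₁)) hW
  have hφz₀ := hφpos z₀ hz₀0
  have hφμ₁ := hφpos μ₁ (hz₀0.trans hμ₁.le)
  -- value of Q z₀ from H z₀ = 0
  have hH0 : Er0 = cst * (Real.exp (-(z₀^2) * r) / p.φ z₀) := by
    have h5 := hHz₀
    unfold Params.H at h5
    rw [← hr_def, ← hW_def, ← hcst_def, ← hEr0_def] at h5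
    linarith
  have hexp0 : Real.exp (-(z₀^2) * r) * Real.exp (z₀^2 * r) = 1 := by
    have h6 : -(z₀^2) * r + z₀^2 * r = 0 := by ring
    rw [← Real.exp_add, h6, Real.exp_zero]
  have h1 : Er0 * p.φ z₀ = cst * Real.exp (-(z₀^2) * r) := by
    rw [hH0]
    field_simp
  have hQz₀ : p.Q z₀ = p.ℓ₁ / p.ℓ₂ * cst / Er0 := by
    unfold Params.Q
    rw [← hr_def, eq_div_iff hEr0.ne']
    calc p.ℓ₁ / p.ℓ₂ * p.φ z₀ * Real.exp (z₀^2 * r) * Er0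
        = p.ℓ₁ / p.ℓ₂ * (Er0 * p.φ z₀) * Real.exp (z₀^2 * r) := by ring
      _ = p.ℓ₁ / p.ℓ₂ * (cst * Real.exp (-(z₀^2) * r)) * Real.exp (z₀^2 * r) := by rw [h1]
      _ = p.ℓ₁ / p.ℓ₂ * cst * (Real.exp (-(z₀^2) * r) * Real.exp (z₀^2 * r)) := by ring
      _ = p.ℓ₁ / p.ℓ₂ * cst := by rw [hexp0, mul_one]
  have hQz₀pos : 0 < p.Q z₀ := by
    rw [hQz₀]
    exact div_pos (mul_pos (div_pos p.hℓ₁ p.hℓ₂) hcst) hEr0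
  have hQmono : p.Q z₀ ≤ p.Q μ₁ := by
    unfold Params.Q
    rw [← hr_def]
    have hsq : z₀^2 ≤ μ₁^2 := pow_le_pow_left₀ hz₀0 hμ₁.le 2
    have hexple : Real.exp (z₀^2 * r) ≤ Real.exp (μ₁^2 * r) :=
      Real.exp_le_exp.mpr (mul_le_mul_of_nonneg_right hsq hr.le)
    have hl : 0 < p.ℓ₁ / p.ℓ₂ := div_pos p.hℓ₁ p.hℓ₂
    exact mul_le_mul (mul_le_mul_of_nonneg_left hφmono hl.le) hexple
      (Real.exp_pos _).le (mul_nonneg hl.le hφμ₁.le)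
  have hQμ₁pos : 0 < p.Q μ₁ := hQz₀pos.trans_le hQmono
  -- μ₂ must be positive
  have hμ₂pos : 0 < μ₂ := by
    rcases lt_or_eq_of_le hμ₂ with h | h
    · exact h
    · exfalso
      have hV0 : p.V A μ₂ = 0 := by
        rw [← h]
        unfold Params.V
        simp [StefanAux.erf_zero]
      rw [hsys, hV0] at hQμ₁pos
      exact lt_irrefl 0 hQμ₁pos
  set E2 : ℝ := erf (μ₂ * Real.sqrt sv) with hE2_def
  have hE2 : 0 < E2 := StefanAux.erf_pos (mul_pos hμ₂pos (Real.sqrt_pos.mpr hsv))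
  set K : ℝ := Real.sqrt (p.c₁ * p.c₃ * p.k₃ / (Real.pi * p.k₁)) with hK_def
  have hK : 0 < K := Real.sqrt_pos.mpr
    (div_pos (mul_pos (mul_pos p.hc₁ p.hc₃) p.hk₃) (mul_pos Real.pi_pos p.hk₁))
  set X : ℝ := Real.exp (-(μ₂^2) * (sv - r)) with hX_def
  have hX : 0 < X := Real.exp_pos _
  have hsys' : p.Q μ₁ = (A - p.B) / p.ℓ₂ * K * (X / E2)
      - μ₂ * Real.exp (μ₂^2 * r) := by
    rw [hsys]
    unfold Params.V
    rw [← hr_def, ← hs_def, ← hK_def, ← hE2_def, ← hX_def]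
  have hkey : E2 * (p.Q μ₁ + μ₂ * Real.exp (μ₂^2 * r))
      = (A - p.B) / p.ℓ₂ * K * X := by
    calc E2 * (p.Q μ₁ + μ₂ * Real.exp (μ₂^2 * r))
        = (A - p.B) / p.ℓ₂ * K * (X / E2 * E2) := by rw [hsys']; ring
      _ = (A - p.B) / p.ℓ₂ * K * X := by rw [div_mul_cancel₀ X hE2.ne']
  have hABl : 0 < (A - p.B) / p.ℓ₂ := div_pos (sub_pos.mpr hA) p.hℓ₂
  have hexple1 : X ≤ 1 := by
    rw [hX_def, Real.exp_le_one_iff]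
    have h9 : 0 ≤ μ₂^2 * (sv - r) := mul_nonneg (sq_nonneg μ₂) (by linarith)
    linarith
  have hstep : E2 * p.Q z₀ < (A - p.B) / p.ℓ₂ * K := by
    have h7 : p.Q z₀ < p.Q μ₁ + μ₂ * Real.exp (μ₂^2 * r) :=
      lt_of_le_of_lt hQmono (lt_add_of_pos_right _ (mul_pos hμ₂pos (Real.exp_pos _)))
    have h8 : E2 * p.Q z₀ < E2 * (p.Q μ₁ + μ₂ * Real.exp (μ₂^2 * r)) :=
      (mul_lt_mul_iff_right₀ hE2).mpr h7
    rw [hkey] at h8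
    calc E2 * p.Q z₀ < (A - p.B) / p.ℓ₂ * K * X := h8
      _ ≤ (A - p.B) / p.ℓ₂ * K * 1 :=
        mul_le_mul_of_nonneg_left hexple1 (mul_pos hABl hK).le
      _ = (A - p.B) / p.ℓ₂ * K := mul_one _

  set S : ℝ := Real.sqrt (p.k₃ * p.c₃ / (p.k₂ * p.c₂)) with hS_def
  have hS : 0 < S := Real.sqrt_pos.mpr (div_pos (mul_pos p.hk₃ p.hc₃) (mul_pos p.hk₂ p.hc₂))
  -- the key square-root identity
  have hsq_id : Real.sqrt Real.pi * K = p.c₂ * (S * W) := by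
    have hL : 0 ≤ Real.sqrt Real.pi * K := (mul_pos hπ hK).le
    have hR : 0 ≤ p.c₂ * (S * W) := (mul_pos p.hc₂ (mul_pos hS hW)).le
    have hsq : (Real.sqrt Real.pi * K)^2 = (p.c₂ * (S * W))^2 := by
      rw [hK_def, hS_def, hW_def, mul_pow, mul_pow, mul_pow,
        Real.sq_sqrt Real.pi_pos.le,
        Real.sq_sqrt (div_pos (mul_pos (mul_pos p.hc₁ p.hc₃) p.hk₃)
          (mul_pos Real.pi_pos p.hk₁)).le,
        Real.sq_sqrt (div_pos (mul_pos p.hk₃ p.hc₃) (mul_pos p.hk₂ p.hc₂)).le,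
        Real.sq_sqrt (div_pos (mul_pos p.hk₂ p.hc₁) (mul_pos p.hk₁ p.hc₂)).le]
      field_simp [Real.pi_ne_zero, p.hk₁.ne', p.hk₂.ne', p.hc₂.ne']
    calc Real.sqrt Real.pi * K = Real.sqrt ((Real.sqrt Real.pi * K)^2) :=
          (Real.sqrt_sq hL).symm
      _ = Real.sqrt ((p.c₂ * (S * W))^2) := by rw [hsq]
      _ = p.c₂ * (S * W) := Real.sqrt_sq hR
  have hKval : K = p.c₂ * (S * W) / Real.sqrt Real.pi := by
    rw [← hsq_id]
    field_simp
  have hBC' : p.B - p.C ≠ 0 := ne_of_gt (sub_pos.mpr p.hBC)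
  have hprod' : (A - p.B) / p.ℓ₂ * K * (p.B - p.C) = S * (A - p.B) * Er0 * p.Q z₀ := by
    rw [hQz₀, hKval, hcst_def]
    unfold Params.Ste₂
    field_simp [hπ.ne', p.hℓ₁.ne', p.hℓ₂.ne', hEr0.ne']
  have hprod : (A - p.B) / p.ℓ₂ * K = S * ((A - p.B) / (p.B - p.C)) * Er0 * p.Q z₀ := by
    have h13 : S * ((A - p.B) / (p.B - p.C)) * Er0 * p.Q z₀
        = S * (A - p.B) * Er0 * p.Q z₀ / (p.B - p.C) := by ring
    rw [h13, eq_div_iff hBC', hprod']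
  have hE2lt : E2 < S * ((A - p.B) / (p.B - p.C)) * Er0 := by
    have h12 : E2 * p.Q z₀ < S * ((A - p.B) / (p.B - p.C)) * Er0 * p.Q z₀ := by
      rw [← hprod]; exact hstep
    exact (mul_lt_mul_iff_left₀ hQz₀pos).mp h12
  have hF : 1 < (Ainf - p.B) / (Ainf - A) := by
    rw [lt_div_iff₀ (by linarith)]
    linarith
  have hbasepos : 0 < S * ((A - p.B) / (p.B - p.C)) * Er0 :=
    mul_pos (mul_pos hS (div_pos (sub_pos.mpr hA) (sub_pos.mpr p.hBC))) hEr0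
  have hfinal : S * ((A - p.B) / (p.B - p.C)) * Er0
      < S * ((A - p.B) / (p.B - p.C)) * ((Ainf - p.B) / (Ainf - A)) * Er0 := by
    have h10 : S * ((A - p.B) / (p.B - p.C)) * Er0
        < S * ((A - p.B) / (p.B - p.C)) * Er0 * ((Ainf - p.B) / (Ainf - A)) := by
      nth_rewrite 1 [← mul_one (S * ((A - p.B) / (p.B - p.C)) * Er0)]
      exact (mul_lt_mul_iff_right₀ hbasepos).mpr hF
    calc S * ((A - p.B) / (p.B - p.C)) * Er0
        < S * ((A - p.B) / (p.B - p.C)) * Er0 * ((Ainf - p.B) / (Ainf - A)) := h10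
      _ = S * ((A - p.B) / (p.B - p.C)) * ((Ainf - p.B) / (Ainf - A)) * Er0 := by ring
  exact hE2lt.trans hfinal
end
end
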